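/- Let n ≥ 1 and m, p, d be integers with n ≤ m ≤ p and q := d − p ≥ m, and let t be a real number. Then (1/m) Σ_{h=1}^{n} Σ_{j=0}^{h−1} Σ_{k=j}^{j+n−h} (−1)^k F(m,p,d,n,h,j,k) e^{−ht − t h(h−2j−1)/d} = Σ_{h=1}^{n} (e^{−ht − t h(h−1)/d}/n!) C(n,h) Σ_{k=0}^{n−h} Σ_{j=0}^{h−1} (−1)^{n−h−k+j} C(n−h,k) C(h−1,j) F̃(m,p,d,n,h,j,k) e^{2thj/d}, where F(m,p,d,n,h,j,k) = [Γ(d+h−j)Γ(n−k+m)Γ(d−j−k−1)Γ(p+n−k)Γ(q+h−j)(d+2h−2j−1)(d−2j−1)Γ(p−j)] / [(n−k−h+j)! (k−j)! j! Γ(d+n−k+h−j) Γ(p+h−j) Γ(h−j) h (d+h−2j−1) Γ(m−k) Γ(p−k) Γ(q−j) Γ(d−j)] and F̃(m,p,d,n,h,j,k) = [(d−2j−1)(d+2h−2j−1)(d−j)_h(d−p−j)_h(m+h−n−j+k)_n(p+h−n−j+k)_n] / [m (d+h−2j−1)(p−j)_h(d−n+h−2j−1+k)_{n+h+1}]. 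-/

import Mathlib

set_option maxHeartbeats 2000000
set_option linter.unusedTactic false


/-- Rising factorial of a real number: `(a)_m = a (a+1) ⋯ (a+m−1)`, with `(a)_0 = 1`. -/
noncomputable def rfr (a : ℝ) (m : ℕ) : ℝ := ∏ i ∈ Finset.range m, (a + (i : ℝ))

lemma rfr_pos {a : ℝ} (ha : 0 < a) (n : ℕ) : 0 < rfr a n :=
  Finset.prod_pos fun i _ => by positivity

lemma gamma_add_nat {a : ℝ} (ha : 0 < a) (n : ℕ) :
    Real.Gamma (a + n) = rfr a n * Real.Gamma a := by
  induction n with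
  | zero => simp [rfr]
  | succ n ih =>
    have h1 : a + ((n+1 : ℕ) : ℝ) = (a + n) + 1 := by push_cast; ring
    have h2 : a + (n : ℝ) ≠ 0 := by positivity
    rw [h1, Real.Gamma_add_one h2, ih]; unfold rfr; rw [Finset.prod_range_succ]
    ring

/-- Rewriting of the fluctuating part of the moment of the Hermitian Jacobi process:
the triple sum over `(h,j,k)` with summand `(−1)^k F(m,p,d,n,h,j,k) e^{−ht−th(h−2j−1)/d}`
equals the re-indexed triple sum featuring `F̃(m,p,d,n,h,j,k)` and binomial coefficients.
Here `q = d − p` and `Γ` is the Gamma function. -/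
theorem stmt_1 (n m p d : ℕ) (hn : 1 ≤ n) (hnm : n ≤ m) (hmp : m ≤ p) (hq : m ≤ d - p)
    (t : ℝ) :
    (1 / (m : ℝ)) * ∑ h ∈ Finset.Icc 1 n, ∑ j ∈ Finset.range h,
      ∑ k ∈ Finset.Icc j (j + n - h),
        (-1 : ℝ) ^ k *
          ((Real.Gamma ((d : ℝ) + h - j) * Real.Gamma ((n : ℝ) - k + m) *
              Real.Gamma ((d : ℝ) - j - k - 1) * Real.Gamma ((p : ℝ) + n - k) *
              Real.Gamma ((d : ℝ) - p + h - j) *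
              ((d : ℝ) + 2 * h - 2 * j - 1) * ((d : ℝ) - 2 * j - 1) * Real.Gamma ((p : ℝ) - j)) /
            (((n + j - (k + h)).factorial : ℝ) * ((k - j).factorial : ℝ) * (j.factorial : ℝ) *
              Real.Gamma ((d : ℝ) + n - k + h - j) * Real.Gamma ((p : ℝ) + h - j) *
              Real.Gamma ((h : ℝ) - j) * (h : ℝ) * ((d : ℝ) + h - 2 * j - 1) *
              Real.Gamma ((m : ℝ) - k) * Real.Gamma ((p : ℝ) - k) *
              Real.Gamma ((d : ℝ) - p - j) * Real.Gamma ((d : ℝ) - j))) *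
          Real.exp (-((h : ℝ) * t) - t * (h : ℝ) * ((h : ℝ) - 2 * j - 1) / d)
    = ∑ h ∈ Finset.Icc 1 n,
        (Real.exp (-((h : ℝ) * t) - t * (h : ℝ) * ((h : ℝ) - 1) / d) / (n.factorial : ℝ)) *
          (n.choose h : ℝ) *
          ∑ k ∈ Finset.range (n - h + 1), ∑ j ∈ Finset.range h,
            (-1 : ℝ) ^ (n - h - k + j) * ((n - h).choose k : ℝ) * ((h - 1).choose j : ℝ) *
              ((((d : ℝ) - 2 * j - 1) * ((d : ℝ) + 2 * h - 2 * j - 1) *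
                  rfr ((d : ℝ) - j) h * rfr ((d : ℝ) - p - j) h *
                  rfr ((m : ℝ) + h - n - j + k) n * rfr ((p : ℝ) + h - n - j + k) n) /
                ((m : ℝ) * ((d : ℝ) + h - 2 * j - 1) * rfr ((p : ℝ) - j) h *
                  rfr ((d : ℝ) - n + h - 2 * j - 1 + k) (n + h + 1))) *
              Real.exp (2 * t * (h : ℝ) * (j : ℝ) / d) := by
  have hd : p + m ≤ d := by omega
  simp only [Finset.mul_sum]
  refine Finset.sum_congr rfl ?_
  intro h hh
  rw [Finset.mem_Icc] at hh
  obtain ⟨hh1, hhn⟩ := hh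
  conv_rhs => rw [Finset.sum_comm]
  refine Finset.sum_congr rfl ?_
  intro j hj
  rw [Finset.mem_range] at hj
  refine (Finset.sum_nbij' (fun i => j + (n - h) - i) (fun k => j + (n - h) - k)
    ?_ ?_ ?_ ?_ ?_).symm
  · intro a ha; rw [Finset.mem_range] at ha; rw [Finset.mem_Icc]; omega
  · intro a ha; rw [Finset.mem_Icc] at ha; rw [Finset.mem_range]; omega
  · intro a ha; rw [Finset.mem_range] at ha; omega
  · intro a ha; rw [Finset.mem_Icc] at ha; omega
  · intro i hi
    rw [Finset.mem_range] at hi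
    replace hi : i ≤ n - h := by omega
    -- nat index normalizations
    have e1 : n + j - (j + (n - h) - i + h) = i := by omega
    have e2 : j + (n - h) - i - j = n - h - i := by omega
    have e3 : n - h - i + j = j + (n - h) - i := by omega
    rw [e1, e2, e3]
    have hkr : ((j + (n - h) - i : ℕ) : ℝ) = (j : ℝ) + n - h - i := by
      rw [Nat.cast_sub (by omega), Nat.cast_add, Nat.cast_sub hhn]; ring
    rw [hkr]
    -- positivity facts
    have c1 : (0:ℝ) < (d:ℝ) - j := by
      have : j < d := by omega
      have := (Nat.cast_lt (α := ℝ)).2 this; linarith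
    have c2 : (0:ℝ) < (m:ℝ) + h - n - j + i := by
      have : n + j < m + h + i := by omega
      have := (Nat.cast_lt (α := ℝ)).2 this; push_cast at this; linarith
    have c3 : (0:ℝ) < (d:ℝ) - n + h - 2*j - 1 + i := by
      have : n + 2*j + 1 < d + h + i := by omega
      have := (Nat.cast_lt (α := ℝ)).2 this; push_cast at this; linarith
    have c4 : (0:ℝ) < (p:ℝ) + h - n - j + i := by
      have : n + j < p + h + i := by omega
      have := (Nat.cast_lt (α := ℝ)).2 this; push_cast at this; linarith
    have c5 : (0:ℝ) < (d:ℝ) - p - j := by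
      have : p + j < d := by omega
      have := (Nat.cast_lt (α := ℝ)).2 this; push_cast at this; linarith
    have c6 : (0:ℝ) < (p:ℝ) - j := by
      have : j < p := by omega
      have := (Nat.cast_lt (α := ℝ)).2 this; linarith
    have c7 : (0:ℝ) < (d:ℝ) + h - 2*j - 1 := by
      have : 2*j + 1 < d + h := by omega
      have := (Nat.cast_lt (α := ℝ)).2 this; push_cast at this; linarith
    -- Gamma rewrites
    rw [show (d:ℝ) + h - j = ((d:ℝ) - j) + (h : ℕ) by push_cast; ring,
        gamma_add_nat c1,
        show (n:ℝ) - ((j:ℝ) + n - h - i) + m = ((m:ℝ) + h - n - j + i) + (n : ℕ) by push_cast; ring,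
        gamma_add_nat c2,
        show (m:ℝ) - ((j:ℝ) + n - h - i) = (m:ℝ) + h - n - j + i by ring,
        show (d:ℝ) - j - ((j:ℝ) + n - h - i) - 1 = (d:ℝ) - n + h - 2*j - 1 + i by ring,
        show (d:ℝ) + n - ((j:ℝ) + n - h - i) + h - j
            = ((d:ℝ) - n + h - 2*j - 1 + i) + ((n + h + 1 : ℕ) : ℝ) by push_cast; ring,
        gamma_add_nat c3,
        show (p:ℝ) + n - ((j:ℝ) + n - h - i) = ((p:ℝ) + h - n - j + i) + (n : ℕ) by push_cast; ring,
        gamma_add_nat c4,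
        show (p:ℝ) - ((j:ℝ) + n - h - i) = (p:ℝ) + h - n - j + i by ring,
        show (d:ℝ) - p + h - j = ((d:ℝ) - p - j) + (h : ℕ) by push_cast; ring,
        gamma_add_nat c5,
        show (p:ℝ) + h - j = ((p:ℝ) - j) + (h : ℕ) by push_cast; ring,
        gamma_add_nat c6,
        show (h:ℝ) - j = ((h - j - 1 : ℕ) : ℝ) + 1 by
          rw [Nat.cast_sub (by omega), Nat.cast_sub (by omega)]; push_cast; ring,
        Real.Gamma_nat_eq_factorial]
    -- choose to factorials
    rw [Nat.cast_choose ℝ hhn, Nat.cast_choose ℝ hi, Nat.cast_choose ℝ (by omega : j ≤ h - 1)]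
    have hf1 : (h.factorial : ℝ) = (h : ℝ) * ((h-1).factorial : ℝ) := by
      rw [← Nat.mul_factorial_pred (by omega : h ≠ 0)]; push_cast; ring
    have hf2 : h - 1 - j = h - j - 1 := by omega
    rw [hf1, hf2]
    -- exponentials
    have hexp : Real.exp (-((h:ℝ) * t) - t * h * ((h:ℝ) - 1) / d) * Real.exp (2 * t * h * (j:ℝ) / d)
        = Real.exp (-((h:ℝ) * t) - t * h * ((h:ℝ) - 2 * j - 1) / d) := by
      rw [← Real.exp_add]; congr 1; ring
    rw [← hexp]
    -- nonzeroness
    have g1 := (Real.Gamma_pos_of_pos c1).ne'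
    have g2 := (Real.Gamma_pos_of_pos c2).ne'
    have g3 := (Real.Gamma_pos_of_pos c3).ne'
    have g4 := (Real.Gamma_pos_of_pos c4).ne'
    have g5 := (Real.Gamma_pos_of_pos c5).ne'
    have g6 := (Real.Gamma_pos_of_pos c6).ne'
    have r1 := (rfr_pos c1 h).ne'
    have r2 := (rfr_pos c2 n).ne'
    have r3 := (rfr_pos c3 (n+h+1)).ne'
    have r4 := (rfr_pos c4 n).ne'
    have r5 := (rfr_pos c5 h).ne'
    have r6 := (rfr_pos c6 h).ne'
    have hm0 : (m:ℝ) ≠ 0 := Nat.cast_ne_zero.2 (by omega)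
    have hh0 : (h:ℝ) ≠ 0 := Nat.cast_ne_zero.2 (by omega)
    have fac : ∀ a : ℕ, (a.factorial : ℝ) ≠ 0 := fun a =>
      Nat.cast_ne_zero.2 a.factorial_ne_zero
    field_simp [g1, g2, g3, g4, g5, g6, r1, r2, r3, r4, r5, r6, hm0, hh0, fac, c7.ne']
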